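/- For every positive integer n, as an identity of rational functions in q: ∑ over partitions (1^{m_1},…,n^{m_n}) of n of ∏_{i=1}^n 1/(m_i!·(i(1−q^i))^{m_i}) equals ∏_{i=1}^n 1/(1 − q^i). -/

import Mathlib

open RatFunc Finset

noncomputable section CayleyAux

namespace CayleyAux

abbrev K := RatFunc ℚ

instance : CharZero K := by
  refine ⟨fun a b h => ?_⟩
  have h2 : (algebraMap (Polynomial ℚ) K) (a : Polynomial ℚ) = algebraMap (Polynomial ℚ) K (b : Polynomial ℚ) := by
    rw [map_natCast, map_natCast]
    exact h
  exact_mod_cast RatFunc.algebraMap_injective ℚ h2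

lemma one_sub_X_pow_ne_zero {i : ℕ} (hi : 1 ≤ i) : (1 - RatFunc.X ^ i : K) ≠ 0 := by
  rw [sub_ne_zero]
  intro h
  have h' : (algebraMap (Polynomial ℚ) K) 1 = (algebraMap (Polynomial ℚ) K) (Polynomial.X ^ i) := by
    rw [map_one, map_pow, RatFunc.algebraMap_X, h]
  have := RatFunc.algebraMap_injective ℚ h'
  have := congrArg Polynomial.natDegree this
  simp [Polynomial.natDegree_X_pow] at this
  omega

lemma cast_ne_zero_K {i : ℕ} (hi : 1 ≤ i) : ((i : K)) ≠ 0 :=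
  Nat.cast_ne_zero.mpr (by omega)

/-- the base weight `1/(i(1-X^i))` -/
def g (i : ℕ) : K := 1 / ((i : K) * (1 - RatFunc.X ^ i))

/-- the factor for a part `i` with multiplicity `m` -/
def f (i m : ℕ) : K := 1 / ((m.factorial : K) * (((i : K)) * (1 - RatFunc.X ^ i)) ^ m)

lemma f_zero (i : ℕ) : f i 0 = 1 := by simp [f]

lemma f_succ {i : ℕ} (hi : 1 ≤ i) (m : ℕ) :
    f i (m + 1) = f i m * g i * (1 / ((m : K) + 1)) := by
  have h1 : ((i : K)) ≠ 0 := cast_ne_zero_K hi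
  have h2 : (1 - RatFunc.X ^ i : K) ≠ 0 := one_sub_X_pow_ne_zero hi
  have h3 : ((m.factorial : K)) ≠ 0 := Nat.cast_ne_zero.mpr m.factorial_ne_zero
  have h4 : ((m : K) + 1) ≠ 0 := by
    have : (((m + 1 : ℕ)) : K) ≠ 0 := Nat.cast_ne_zero.mpr (Nat.succ_ne_zero m)
    push_cast at this
    exact this
  have hA : ((i : K)) * (1 - RatFunc.X ^ i) ≠ 0 := mul_ne_zero h1 h2
  have hAm : (((i : K)) * (1 - RatFunc.X ^ i)) ^ m ≠ 0 := pow_ne_zero _ hA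
  have hkey : (((m + 1).factorial : K)) * (((i : K)) * (1 - RatFunc.X ^ i)) ^ (m + 1)
      = ((m.factorial : K) * (((i : K)) * (1 - RatFunc.X ^ i)) ^ m)
        * ((((i : K)) * (1 - RatFunc.X ^ i)) * ((m : K) + 1)) := by
    rw [Nat.factorial_succ, pow_succ]
    push_cast
    ring
  rw [f, f, g, hkey]
  simp only [one_div, mul_inv]
  ring

/-- weight of a multiset of parts -/
def W (s : Multiset ℕ) : K := ∏ i ∈ s.toFinset, f i (s.count i)

lemma W_cons {k : ℕ} (hk : 1 ≤ k) (s : Multiset ℕ) :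
    W (k ::ₘ s) = g k * (1 / ((s.count k : K) + 1)) * W s := by
  classical
  unfold W
  rw [Multiset.toFinset_cons]
  by_cases hmem : k ∈ s.toFinset
  · rw [Finset.insert_eq_self.2 hmem]
    rw [← Finset.mul_prod_erase _ _ hmem, ← Finset.mul_prod_erase _ (fun i => f i (s.count i)) hmem]
    have hprod : ∏ i ∈ s.toFinset.erase k, f i ((k ::ₘ s).count i)
        = ∏ i ∈ s.toFinset.erase k, f i (s.count i) := by
      refine Finset.prod_congr rfl fun i hi => ?_
      rw [Multiset.count_cons_of_ne (Finset.mem_erase.1 hi).1 s]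
    rw [hprod, Multiset.count_cons_self, f_succ hk]
    ring
  · rw [Finset.prod_insert hmem]
    have hcount : s.count k = 0 := by
      simpa [Multiset.count_eq_zero] using fun h => hmem (Multiset.mem_toFinset.2 h)
    have hprod : ∏ i ∈ s.toFinset, f i ((k ::ₘ s).count i)
        = ∏ i ∈ s.toFinset, f i (s.count i) := by
      refine Finset.prod_congr rfl fun i hi => ?_
      have hik : i ≠ k := by
        intro h
        subst h
        exact hmem hi
      rw [Multiset.count_cons_of_ne hik s]
    rw [hprod, Multiset.count_cons_self, hcount, f_succ hk, f_zero]
    norm_num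

/-- sum of weights over partitions of `n` -/
def F (n : ℕ) : K := ∑ P : Nat.Partition n, W P.parts

lemma F_zero : F 0 = 1 := by
  rw [F, Fintype.sum_unique]
  simp [W]

lemma prod_Icc_eq_W (n : ℕ) (P : Nat.Partition n) :
    ∏ i ∈ Finset.Icc 1 n, f i (P.parts.count i) = W P.parts := by
  rw [W]
  symm
  refine Finset.prod_subset ?_ ?_
  · intro i hi
    rw [Multiset.mem_toFinset] at hi
    rw [Finset.mem_Icc]
    exact ⟨P.parts_pos hi, (Multiset.le_sum_of_mem hi).trans_eq P.parts_sum⟩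
  · intro i _ hi
    rw [Multiset.mem_toFinset] at hi
    rw [Multiset.count_eq_zero_of_notMem hi, f_zero]

/-- the key bijection step: transferring a part of size `k` -/
lemma step (m k : ℕ) (hk : 1 ≤ k) :
    ∑ P : Nat.Partition (m + k), ((P.parts.count k : K)) * W P.parts
      = ∑ Q : Nat.Partition m, g k * W Q.parts := by
  classical
  rw [← Finset.sum_filter_of_ne (p := fun P : Nat.Partition (m + k) => k ∈ P.parts)
    (fun P _ hP => by
      by_contra h
      exact hP (by rw [Multiset.count_eq_zero_of_notMem h]; simp))]
  symm
  refine Finset.sum_bij' (i := fun Q _ => ⟨k ::ₘ Q.parts, ?_, ?_⟩)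
    (j := fun P hP => ⟨P.parts.erase k, ?_, ?_⟩) ?_ ?_ ?_ ?_ ?_
  · intro i hi
    rcases Multiset.mem_cons.1 hi with h | h
    · omega
    · exact Q.parts_pos h
  · rw [Multiset.sum_cons, Q.parts_sum]; omega
  · intro i hi
    exact P.parts_pos (Multiset.mem_of_mem_erase hi)
  · have hkP : k ∈ P.parts := (Finset.mem_filter.1 hP).2
    have := congrArg Multiset.sum (Multiset.cons_erase hkP)
    rw [Multiset.sum_cons, P.parts_sum] at this
    omega
  · intro Q _
    simp only [Finset.mem_filter, Finset.mem_univ, true_and]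
    exact Multiset.mem_cons_self k Q.parts
  · intro P hP
    exact Finset.mem_univ _
  · intro Q _
    ext1
    simp [Multiset.erase_cons_head]
  · intro P hP
    ext1
    exact Multiset.cons_erase (Finset.mem_filter.1 hP).2
  · intro Q _
    simp only
    rw [W_cons hk, Multiset.count_cons_self]
    have hc : (((Q.parts.count k + 1 : ℕ) : K)) = (Q.parts.count k : K) + 1 := by push_cast; ring
    rw [hc]
    have hne : ((Q.parts.count k : K) + 1) ≠ 0 := by
      have : (((Q.parts.count k + 1 : ℕ)) : K) ≠ 0 := Nat.cast_ne_zero.mpr (Nat.succ_ne_zero _)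
      push_cast at this
      exact this
    field_simp

lemma F_rec (n : ℕ) :
    (n : K) * F n = ∑ k ∈ Finset.Icc 1 n, (1 / (1 - RatFunc.X ^ k)) * F (n - k) := by
  classical
  have hsum : ∀ P : Nat.Partition n, (n : K) = ∑ k ∈ Finset.Icc 1 n, ((k * P.parts.count k : ℕ) : K) := by
    intro P
    rw [← Nat.cast_sum]
    congr 1
    have h1 : ∑ k ∈ P.parts.toFinset, k * P.parts.count k = n := by
      have h2 : P.parts.sum = ∑ m ∈ P.parts.toFinset, Multiset.count m P.parts * m := by
        simpa using Finset.sum_multiset_map_count P.parts id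
      calc ∑ k ∈ P.parts.toFinset, k * P.parts.count k
          = ∑ m ∈ P.parts.toFinset, Multiset.count m P.parts * m :=
            Finset.sum_congr rfl fun i _ => Nat.mul_comm _ _
        _ = P.parts.sum := h2.symm
        _ = n := P.parts_sum
    calc n = ∑ k ∈ P.parts.toFinset, k * P.parts.count k := h1.symm
      _ = ∑ k ∈ Finset.Icc 1 n, k * P.parts.count k := by
          refine Finset.sum_subset ?_ ?_
          · intro i hi
            rw [Multiset.mem_toFinset] at hi
            rw [Finset.mem_Icc]
            exact ⟨P.parts_pos hi, (Multiset.le_sum_of_mem hi).trans_eq P.parts_sum⟩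
          · intro i _ hi
            rw [Multiset.mem_toFinset] at hi
            rw [Multiset.count_eq_zero_of_notMem hi, Nat.mul_zero]
  calc (n : K) * F n = ∑ P : Nat.Partition n, (n : K) * W P.parts := by
        rw [F, Finset.mul_sum]
    _ = ∑ P : Nat.Partition n, ∑ k ∈ Finset.Icc 1 n, ((k * P.parts.count k : ℕ) : K) * W P.parts := by
        refine Finset.sum_congr rfl fun P _ => ?_
        rw [← Finset.sum_mul, ← hsum P]
    _ = ∑ k ∈ Finset.Icc 1 n, ∑ P : Nat.Partition n, ((k * P.parts.count k : ℕ) : K) * W P.parts :=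
        Finset.sum_comm
    _ = ∑ k ∈ Finset.Icc 1 n, (1 / (1 - RatFunc.X ^ k)) * F (n - k) := by
        refine Finset.sum_congr rfl fun k hk => ?_
        rw [Finset.mem_Icc] at hk
        have hstep := step (n - k) k hk.1
        rw [Nat.sub_add_cancel hk.2] at hstep
        have h2 : ∑ P : Nat.Partition n, ((k * P.parts.count k : ℕ) : K) * W P.parts
            = (k : K) * ∑ P : Nat.Partition n, ((P.parts.count k : K)) * W P.parts := by
          rw [Finset.mul_sum]
          refine Finset.sum_congr rfl fun P _ => ?_
          push_cast
          ring
        rw [h2, hstep, ← Finset.mul_sum, ← F]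
        have h1 : ((k : K)) ≠ 0 := cast_ne_zero_K hk.1
        have h2 : (1 - RatFunc.X ^ k : K) ≠ 0 := one_sub_X_pow_ne_zero hk.1
        rw [g]
        field_simp

/-- the telescoping sum -/
lemma tele (m : ℕ) : ∀ r, r ≤ m + 1 →
    ∑ l ∈ Finset.range r, (RatFunc.X : K) ^ l * ∏ i ∈ Finset.Icc (l + 1) m, (1 - RatFunc.X ^ i)
      = ∏ i ∈ Finset.Icc r m, (1 - RatFunc.X ^ i) := by
  intro r
  induction r with
  | zero =>
    intro _
    rw [Finset.range_zero, Finset.sum_empty]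
    symm
    apply Finset.prod_eq_zero (i := 0) (Finset.mem_Icc.2 ⟨le_rfl, Nat.zero_le m⟩)
    simp
  | succ r ih =>
    intro hr
    rw [Finset.sum_range_succ, ih (by omega)]
    have hrm : r ≤ m := by omega
    have hsplit : ∏ i ∈ Finset.Icc r m, (1 - RatFunc.X ^ i : K)
        = (1 - RatFunc.X ^ r) * ∏ i ∈ Finset.Icc (r + 1) m, (1 - RatFunc.X ^ i) := by
      rw [← Finset.Ico_add_one_right_eq_Icc, ← Finset.Ico_add_one_right_eq_Icc,
        Finset.prod_eq_prod_Ico_succ_bot (by omega : r < m + 1)]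
    rw [hsplit]
    ring

lemma tele' (m : ℕ) :
    ∑ l ∈ Finset.range (m + 1), (RatFunc.X : K) ^ l * ∏ i ∈ Finset.Icc (l + 1) m, (1 - RatFunc.X ^ i) = 1 := by
  rw [tele m (m + 1) le_rfl, Finset.Icc_eq_empty (by omega), Finset.prod_empty]

lemma T_eq (n : ℕ) :
    ∑ k ∈ Finset.Icc 1 n, (∏ i ∈ Finset.Icc (n - k + 1) n, (1 - RatFunc.X ^ i : K)) / (1 - RatFunc.X ^ k)
      = (n : K) := by
  induction n with
  | zero => simp
  | succ n ih =>
    have hdecomp : ∀ k ∈ Finset.Icc 1 (n + 1),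
        (∏ i ∈ Finset.Icc (n + 1 - k + 1) (n + 1), (1 - RatFunc.X ^ i : K)) / (1 - RatFunc.X ^ k)
          = (∏ i ∈ Finset.Icc (n + 1 - k) n, (1 - RatFunc.X ^ i : K)) / (1 - RatFunc.X ^ k)
            + (RatFunc.X : K) ^ (n + 1 - k) * ∏ i ∈ Finset.Icc (n + 1 - k + 1) n, (1 - RatFunc.X ^ i) := by
      intro k hk
      rw [Finset.mem_Icc] at hk
      have hk2 : n + 1 - k ≤ n := by omega
      have hXk : (1 - RatFunc.X ^ k : K) ≠ 0 := one_sub_X_pow_ne_zero hk.1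
      have h1 : ∏ i ∈ Finset.Icc (n + 1 - k + 1) (n + 1), (1 - RatFunc.X ^ i : K)
          = (1 - RatFunc.X ^ (n + 1)) * ∏ i ∈ Finset.Icc (n + 1 - k + 1) n, (1 - RatFunc.X ^ i) := by
        rw [← Finset.Ico_add_one_right_eq_Icc, ← Finset.Ico_add_one_right_eq_Icc,
          Finset.prod_Ico_succ_top (by omega : n + 1 - k + 1 ≤ n + 1)]
        ring
      have h2 : ∏ i ∈ Finset.Icc (n + 1 - k) n, (1 - RatFunc.X ^ i : K)
          = (1 - RatFunc.X ^ (n + 1 - k)) * ∏ i ∈ Finset.Icc (n + 1 - k + 1) n, (1 - RatFunc.X ^ i) := by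
        rw [← Finset.Ico_add_one_right_eq_Icc, ← Finset.Ico_add_one_right_eq_Icc,
          Finset.prod_eq_prod_Ico_succ_bot (by omega : n + 1 - k < n + 1)]
      have hpow : (RatFunc.X : K) ^ (n + 1) = RatFunc.X ^ (n + 1 - k) * RatFunc.X ^ k := by
        rw [← pow_add]
        congr 1
        omega
      rw [h1, h2, hpow]
      field_simp
      ring
    rw [Finset.sum_congr rfl hdecomp, Finset.sum_add_distrib]
    have hfirst : ∑ k ∈ Finset.Icc 1 (n + 1),
        (∏ i ∈ Finset.Icc (n + 1 - k) n, (1 - RatFunc.X ^ i : K)) / (1 - RatFunc.X ^ k) = (n : K) := by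
      rw [← Finset.Ico_add_one_right_eq_Icc, Finset.sum_Ico_succ_top (by omega : 1 ≤ n + 1)]
      have hlast : (∏ i ∈ Finset.Icc (n + 1 - (n + 1)) n, (1 - RatFunc.X ^ i : K)) / (1 - RatFunc.X ^ (n + 1)) = 0 := by
        have h0 : (0 : ℕ) ∈ Finset.Icc (n + 1 - (n + 1)) n := by
          rw [Finset.mem_Icc]; omega
        rw [Finset.prod_eq_zero h0 (by simp), zero_div]
      rw [hlast, add_zero, Finset.Ico_add_one_right_eq_Icc, ← ih]
      refine Finset.sum_congr rfl fun k hk => ?_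
      rw [Finset.mem_Icc] at hk
      have : n + 1 - k = n - k + 1 := by omega
      rw [this]
    have hsecond : ∑ k ∈ Finset.Icc 1 (n + 1),
        (RatFunc.X : K) ^ (n + 1 - k) * ∏ i ∈ Finset.Icc (n + 1 - k + 1) n, (1 - RatFunc.X ^ i) = 1 := by
      have hbij : ∑ k ∈ Finset.Icc 1 (n + 1),
          (RatFunc.X : K) ^ (n + 1 - k) * ∏ i ∈ Finset.Icc (n + 1 - k + 1) n, (1 - RatFunc.X ^ i)
          = ∑ l ∈ Finset.range (n + 1),
            (RatFunc.X : K) ^ l * ∏ i ∈ Finset.Icc (l + 1) n, (1 - RatFunc.X ^ i) := by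
        refine Finset.sum_nbij' (i := fun k => n + 1 - k) (j := fun l => n + 1 - l) ?_ ?_ ?_ ?_ ?_
        · intro k hk
          simp only [Finset.mem_Icc, Finset.mem_range] at hk ⊢
          omega
        · intro l hl
          simp only [Finset.mem_Icc, Finset.mem_range] at hl ⊢
          omega
        · intro k hk
          simp only [Finset.mem_Icc] at hk
          omega
        · intro l hl
          simp only [Finset.mem_range] at hl
          omega
        · intro k _
          rfl
      rw [hbij, tele' n]
    rw [hfirst, hsecond]
    push_cast
    ring

/-- the product side -/
def H (n : ℕ) : K := ∏ i ∈ Finset.Icc 1 n, (1 : K) / (1 - RatFunc.X ^ i)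

lemma H_rec (n : ℕ) :
    (n : K) * H n = ∑ k ∈ Finset.Icc 1 n, (1 / (1 - RatFunc.X ^ k)) * H (n - k) := by
  have hprod_ne : ∀ m : ℕ, (∏ i ∈ Finset.Icc 1 m, (1 - RatFunc.X ^ i : K)) ≠ 0 := by
    intro m
    refine Finset.prod_ne_zero_iff.2 fun i hi => ?_
    rw [Finset.mem_Icc] at hi
    exact one_sub_X_pow_ne_zero hi.1
  have hH : ∀ m : ℕ, H m = (∏ i ∈ Finset.Icc 1 m, (1 - RatFunc.X ^ i : K))⁻¹ := by
    intro m
    rw [H, ← Finset.prod_inv_distrib]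
    exact Finset.prod_congr rfl fun i _ => one_div _
  have key : ∀ k ∈ Finset.Icc 1 n,
      (1 / (1 - RatFunc.X ^ k)) * H (n - k)
        = H n * ((∏ i ∈ Finset.Icc (n - k + 1) n, (1 - RatFunc.X ^ i : K)) / (1 - RatFunc.X ^ k)) := by
    intro k hk
    rw [Finset.mem_Icc] at hk
    have hsplit : (∏ i ∈ Finset.Icc 1 (n - k), (1 - RatFunc.X ^ i : K))
        * ∏ i ∈ Finset.Icc (n - k + 1) n, (1 - RatFunc.X ^ i : K)
        = ∏ i ∈ Finset.Icc 1 n, (1 - RatFunc.X ^ i : K) := by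
      rw [← Finset.Ico_add_one_right_eq_Icc, ← Finset.Ico_add_one_right_eq_Icc, ← Finset.Ico_add_one_right_eq_Icc]
      exact Finset.prod_Ico_consecutive _ (by omega) (by omega)
    have h1 := hprod_ne (n - k)
    have h2 := hprod_ne n
    have h3 : (1 - RatFunc.X ^ k : K) ≠ 0 := one_sub_X_pow_ne_zero hk.1
    rw [hH, hH, ← hsplit]
    have h4 : (∏ i ∈ Finset.Icc (n - k + 1) n, (1 - RatFunc.X ^ i : K)) ≠ 0 := by
      refine Finset.prod_ne_zero_iff.2 fun i hi => ?_
      rw [Finset.mem_Icc] at hi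
      exact one_sub_X_pow_ne_zero (by omega)
    field_simp
  rw [Finset.sum_congr rfl key, ← Finset.mul_sum, T_eq]
  ring

lemma F_eq_H : ∀ n, F n = H n := by
  intro n
  induction n using Nat.strong_induction_on with
  | _ n ih =>
    match n with
    | 0 => rw [F_zero, H]; simp
    | Nat.succ n =>
      have hne : (((n + 1 : ℕ) : K)) ≠ 0 := cast_ne_zero_K (by omega)
      apply mul_left_cancel₀ hne
      rw [F_rec, H_rec]
      refine Finset.sum_congr rfl fun k hk => ?_
      rw [Finset.mem_Icc] at hk
      rw [ih (n + 1 - k) (by omega)]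

end CayleyAux

end CayleyAux

open RatFunc in
theorem cayley_formula (n : ℕ) (hn : 0 < n) :
    ∑ P : Nat.Partition n, ∏ i ∈ Finset.Icc 1 n,
        (1 : RatFunc ℚ) /
          (((P.parts.count i).factorial : RatFunc ℚ) *
            ((i : RatFunc ℚ) * (1 - RatFunc.X ^ i)) ^ (P.parts.count i)) =
      ∏ i ∈ Finset.Icc 1 n, (1 : RatFunc ℚ) / (1 - RatFunc.X ^ i) := by
  have h : ∑ P : Nat.Partition n, ∏ i ∈ Finset.Icc 1 n, CayleyAux.f i (P.parts.count i)
      = CayleyAux.H n := by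
    rw [← CayleyAux.F_eq_H, CayleyAux.F]
    exact Finset.sum_congr rfl fun P _ => CayleyAux.prod_Icc_eq_W n P
  exact h
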